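/- Let s, n be positive integers, V = 𝔽₂^{s×n}, and let P ⊆ V be an 𝔽₂-linear subspace. Then WAFOM(P) := Σ_{A ∈ P^⊥ \ {0}} 2^{−μ'(A)} satisfies the computational formula WAFOM(P) = (1/|P|) · Σ_{x = (x_{i,j}) ∈ P} [ Π_{1≤i≤s} Π_{1≤j≤n} (1 + (−1)^{x_{i,j}} · 2^{−(j+1)}) − 1 ]. -/

import Mathlib

lemma wafom_val20 : ((2:ZMod 2)).val = 0 := rfl
lemma wafom_val11 : ((1:ZMod 2)).val = 1 := rfl
lemma wafom_val00 : ((0:ZMod 2)).val = 0 := rfl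

noncomputable def wChar : ZMod 2 → ℝ := fun a => (-1) ^ a.val

lemma wChar_zero : wChar 0 = 1 := by simp [wChar]

lemma wChar_add (a b : ZMod 2) : wChar (a + b) = wChar a * wChar b := by
  rcases (show ∀ a : ZMod 2, a = 0 ∨ a = 1 by decide) a with rfl | rfl <;> rcases (show ∀ a : ZMod 2, a = 0 ∨ a = 1 by decide) b with rfl | rfl <;> norm_num [wChar, wafom_val20, wafom_val11, wafom_val00]

lemma wChar_add_one (a : ZMod 2) : wChar (a + 1) = - wChar a := by
  rcases (show ∀ a : ZMod 2, a = 0 ∨ a = 1 by decide) a with rfl | rfl <;> norm_num [wChar, wafom_val20, wafom_val11, wafom_val00]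

lemma wChar_sum {ι : Type*} (t : Finset ι) (f : ι → ZMod 2) :
    wChar (∑ i ∈ t, f i) = ∏ i ∈ t, wChar (f i) := by
  classical
  induction t using Finset.cons_induction with
  | empty => simp [wChar_zero]
  | cons a t ha ih => rw [Finset.sum_cons, Finset.prod_cons, wChar_add, ih]

lemma sum_pow_zmod (c : ℝ) : ∑ a : ZMod 2, c ^ (a.val) = 1 + c := by
  rw [show (Finset.univ : Finset (ZMod 2)) = {0, 1} by decide]
  norm_num [wafom_val11, wafom_val00]

lemma key_pow (x a : ZMod 2) (w : ℝ) :
    ((-1 : ℝ) ^ x.val * w) ^ a.val = wChar (x * a) * w ^ a.val := by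
  rcases (show ∀ a : ZMod 2, a = 0 ∨ a = 1 by decide) x with rfl | rfl <;> rcases (show ∀ a : ZMod 2, a = 0 ∨ a = 1 by decide) a with rfl | rfl <;> norm_num [wChar, wafom_val20, wafom_val11, wafom_val00]

lemma two_zpow_sum {ι : Type*} (t : Finset ι) (f : ι → ℤ) :
    (2:ℝ) ^ (∑ i ∈ t, f i) = ∏ i ∈ t, (2:ℝ) ^ (f i) := by
  classical
  induction t using Finset.cons_induction with
  | empty => simp
  | cons a t ha ih => rw [Finset.sum_cons, Finset.prod_cons, zpow_add₀ (by norm_num), ih]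

lemma expand_prod (s n : ℕ) (x : Matrix (Fin s) (Fin n) (ZMod 2)) :
    ∏ i : Fin s, ∏ j : Fin n, (1 + (-1:ℝ)^((x i j).val) * 2^(-(((j:ℕ)+1)+1):ℤ)) =
    ∑ A : Matrix (Fin s) (Fin n) (ZMod 2),
      wChar (∑ i : Fin s, ∑ j : Fin n, x i j * A i j) *
        2^(-(∑ i : Fin s, ∑ j : Fin n, ((j:ℕ)+1+1) * (A i j).val : ℕ) : ℤ) := by
  classical
  have step1 : ∀ i : Fin s, ∀ j : Fin n,
      (1 + (-1:ℝ)^((x i j).val) * 2^(-(((j:ℕ)+1)+1):ℤ)) =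
      ∑ a : ZMod 2, ((-1:ℝ)^((x i j).val) * 2^(-(((j:ℕ)+1)+1):ℤ)) ^ a.val := by
    intro i j; rw [sum_pow_zmod]
  have step2 : ∀ i : Fin s, (∏ j : Fin n, ∑ a : ZMod 2,
      ((-1:ℝ)^((x i j).val) * 2^(-(((j:ℕ)+1)+1):ℤ)) ^ a.val) =
      ∑ g : Fin n → ZMod 2, ∏ j : Fin n,
      ((-1:ℝ)^((x i j).val) * 2^(-(((j:ℕ)+1)+1):ℤ)) ^ ((g j).val) := by
    intro i; rw [Finset.prod_univ_sum]
    exact Finset.sum_congr (by simp) fun g _ => rfl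
  calc ∏ i : Fin s, ∏ j : Fin n, (1 + (-1:ℝ)^((x i j).val) * 2^(-(((j:ℕ)+1)+1):ℤ))
      = ∑ A : Matrix (Fin s) (Fin n) (ZMod 2), ∏ i : Fin s, ∏ j : Fin n,
          ((-1:ℝ)^((x i j).val) * 2^(-(((j:ℕ)+1)+1):ℤ)) ^ ((A i j).val) := by
        simp only [step1, step2]
        rw [Finset.prod_univ_sum]
        exact Finset.sum_congr (by congr 1) fun g _ => rfl
    _ = ∑ A : Matrix (Fin s) (Fin n) (ZMod 2),
          wChar (∑ i : Fin s, ∑ j : Fin n, x i j * A i j) *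
            2^(-(∑ i : Fin s, ∑ j : Fin n, ((j:ℕ)+1+1) * (A i j).val : ℕ) : ℤ) := by
        refine Finset.sum_congr rfl fun A _ => ?_
        simp only [key_pow, Finset.prod_mul_distrib]
        congr 1
        · rw [wChar_sum]
          exact (Finset.prod_congr rfl fun i _ => (wChar_sum _ _)).symm
        · have : ∀ i : Fin s, ∀ j : Fin n,
              ((2:ℝ)^(-(((j:ℕ)+1)+1):ℤ)) ^ ((A i j).val) =
              (2:ℝ) ^ ((-(((j:ℕ)+1)+1) * ((A i j).val : ℤ)) : ℤ) := by
            intro i j; rw [← zpow_natCast ((2:ℝ)^(-(((j:ℕ)+1)+1):ℤ)), ← zpow_mul]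
          simp only [this]
          have hexp : (-(∑ i : Fin s, ∑ j : Fin n, ((j:ℕ)+1+1) * (A i j).val : ℕ) : ℤ) =
              ∑ i : Fin s, ∑ j : Fin n, (-(((j:ℕ)+1)+1) * ((A i j).val : ℤ)) := by
            push_cast
            rw [← Finset.sum_neg_distrib]
            refine Finset.sum_congr rfl fun i _ => ?_
            rw [← Finset.sum_neg_distrib]
            refine Finset.sum_congr rfl fun j _ => ?_
            ring
          rw [hexp, two_zpow_sum]
          exact (Finset.prod_congr rfl fun i _ => (two_zpow_sum _ _)).symm

open scoped Classical in
lemma char_orth (s n : ℕ) (P : Submodule (ZMod 2) (Matrix (Fin s) (Fin n) (ZMod 2)))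
    (A : Matrix (Fin s) (Fin n) (ZMod 2)) :
    ∑ x : P, wChar (∑ i : Fin s, ∑ j : Fin n, (x : Matrix (Fin s) (Fin n) (ZMod 2)) i j * A i j) =
    if ∀ B ∈ P, (∑ i : Fin s, ∑ j : Fin n, B i j * A i j) = (0 : ZMod 2) then (Nat.card P : ℝ)
    else 0 := by
  by_cases h : ∀ B ∈ P, (∑ i : Fin s, ∑ j : Fin n, B i j * A i j) = (0 : ZMod 2)
  · rw [if_pos h]
    have : ∀ x : P, wChar (∑ i : Fin s, ∑ j : Fin n,
        (x : Matrix (Fin s) (Fin n) (ZMod 2)) i j * A i j) = 1 := by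
      intro x; rw [h x.1 x.2, wChar_zero]
    simp only [this, Finset.sum_const, Finset.card_univ, nsmul_eq_mul, mul_one]
    rw [Nat.card_eq_fintype_card]
  · rw [if_neg h]
    push_neg at h
    obtain ⟨B, hBP, hB⟩ := h
    have hB1 : (∑ i : Fin s, ∑ j : Fin n, B i j * A i j) = 1 := by
      have : ∀ a : ZMod 2, a ≠ 0 → a = 1 := by decide
      exact this _ hB
    set f : P → ℝ := fun x => wChar (∑ i : Fin s, ∑ j : Fin n,
        (x : Matrix (Fin s) (Fin n) (ZMod 2)) i j * A i j) with hf
    have hadd : ∀ x : P, f (⟨B, hBP⟩ + x) = - f x := by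
      intro x
      have : (∑ i : Fin s, ∑ j : Fin n,
          ((⟨B, hBP⟩ + x : P) : Matrix (Fin s) (Fin n) (ZMod 2)) i j * A i j) =
          (∑ i : Fin s, ∑ j : Fin n,
            (x : Matrix (Fin s) (Fin n) (ZMod 2)) i j * A i j) + 1 := by
        rw [← hB1]
        simp only [Submodule.coe_add, Matrix.add_apply, add_mul, Finset.sum_add_distrib]
        ring
      rw [hf]
      simp only [this, wChar_add_one]
    have hS : ∑ x : P, f x = ∑ x : P, f (⟨B, hBP⟩ + x) :=
      (Fintype.sum_equiv (Equiv.addLeft (⟨B, hBP⟩ : P)) _ _ (fun x => rfl)).symm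
    simp only [hadd, Finset.sum_neg_distrib] at hS
    linarith [hS]

open scoped Classical in
/-- WAFOM computational formula: for an `𝔽₂`-linear subspace `P ⊆ V = 𝔽₂^{s×n}`,
`Σ_{A ∈ P^⊥ \ {0}} 2^{−μ'(A)} = (1/|P|) Σ_{x ∈ P} [Π_{i,j} (1 + (−1)^{x_{i,j}} 2^{−(j+1)}) − 1]`,
where `μ'(A) = Σ_{i,j} (j+1)·a_{i,j}` and the paper's index `j` runs through `1, …, n`
(so a column index `j : Fin n` corresponds to the paper's `j.val + 1`). -/
theorem wafom_formula (s n : ℕ) (hs : 0 < s) (hn : 0 < n)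
    (P : Submodule (ZMod 2) (Matrix (Fin s) (Fin n) (ZMod 2))) :
    ∑ A ∈ Finset.univ.filter
        (fun A : Matrix (Fin s) (Fin n) (ZMod 2) =>
          (∀ B ∈ P, ∑ i : Fin s, ∑ j : Fin n, B i j * A i j = (0 : ZMod 2)) ∧ A ≠ 0),
        (2 : ℝ) ^ (-(∑ i : Fin s, ∑ j : Fin n, ((j : ℕ) + 1 + 1) * (A i j).val : ℕ) : ℤ) =
      (1 / (Nat.card P : ℝ)) *
        ∑ x : P,
          ((∏ i : Fin s, ∏ j : Fin n,
            (1 + (-1 : ℝ) ^ ((x : Matrix (Fin s) (Fin n) (ZMod 2)) i j).val *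
              (2 : ℝ) ^ (-(((j : ℕ) + 1) + 1 : ℤ)))) - 1) := by
  classical
  set M := Matrix (Fin s) (Fin n) (ZMod 2)
  set w : M → ℝ := fun A =>
    (2 : ℝ) ^ (-(∑ i : Fin s, ∑ j : Fin n, ((j : ℕ) + 1 + 1) * (A i j).val : ℕ) : ℤ) with hw
  set cond : M → Prop := fun A =>
    (∀ B ∈ P, ∑ i : Fin s, ∑ j : Fin n, B i j * A i j = (0 : ZMod 2)) with hcond
  have hN : (0 : ℝ) < (Nat.card P : ℝ) := by
    have : Nonempty P := ⟨0⟩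
    exact_mod_cast Nat.card_pos
  -- each summand of the RHS
  have hterm : ∀ x : P,
      ((∏ i : Fin s, ∏ j : Fin n,
        (1 + (-1 : ℝ) ^ ((x : M) i j).val * (2 : ℝ) ^ (-(((j : ℕ) + 1) + 1 : ℤ)))) - 1) =
      ∑ A ∈ (Finset.univ : Finset M).erase 0,
        wChar (∑ i : Fin s, ∑ j : Fin n, (x : M) i j * A i j) * w A := by
    intro x
    rw [expand_prod]
    have hz : ∀ (i : Fin s) (j : Fin n), (0 : M) i j = 0 := fun _ _ => rfl
    have h0a : (∑ i : Fin s, ∑ j : Fin n, (x : M) i j * (0 : M) i j) = 0 := by simp [hz]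
    have h0b : (∑ i : Fin s, ∑ j : Fin n, ((j : ℕ) + 1 + 1) * ((0 : M) i j).val) = 0 := by
      simp [hz]
    have h0 : wChar (∑ i : Fin s, ∑ j : Fin n, (x : M) i j * (0 : M) i j) * w (0 : M) = 1 := by
      simp only [hw, h0a, h0b, wChar_zero]
      norm_num
    rw [← Finset.sum_erase_add _ _ (Finset.mem_univ (0 : M)), h0]
    ring
  have swap : ∑ x : P,
      ((∏ i : Fin s, ∏ j : Fin n,
        (1 + (-1 : ℝ) ^ ((x : M) i j).val * (2 : ℝ) ^ (-(((j : ℕ) + 1) + 1 : ℤ)))) - 1) =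
      ∑ A ∈ (Finset.univ : Finset M).erase 0,
        (if cond A then (Nat.card P : ℝ) else 0) * w A := by
    simp only [hterm]
    rw [Finset.sum_comm]
    refine Finset.sum_congr rfl fun A _ => ?_
    rw [← Finset.sum_mul, char_orth]
  have filt : (Finset.univ : Finset M).filter (fun A => cond A ∧ A ≠ 0) =
      ((Finset.univ : Finset M).erase 0).filter cond := by
    rw [← Finset.filter_ne' Finset.univ (0 : M), Finset.filter_filter]
    apply Finset.filter_congr
    intro A _
    tauto
  have final : ∑ A ∈ (Finset.univ : Finset M).erase 0,
      (if cond A then (Nat.card P : ℝ) else 0) * w A =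
      (Nat.card P : ℝ) * ∑ A ∈ (Finset.univ : Finset M).filter (fun A => cond A ∧ A ≠ 0), w A := by
    rw [filt, Finset.sum_filter, Finset.mul_sum]
    refine Finset.sum_congr rfl fun A _ => ?_
    by_cases h : cond A
    · rw [if_pos h, if_pos h]
    · rw [if_neg h, if_neg h, zero_mul, mul_zero]
  rw [swap, final, one_div, ← mul_assoc, inv_mul_cancel₀ (ne_of_gt hN), one_mul]
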